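/- Let γ : [0,1] → ℝ² be a continuous closed curve (γ(0) = γ(1)) whose length (total variation) L satisfies L > 1. Then the number of pairs (i,j) ∈ ℤ² such that the image of γ intersects the open square (i,i+1) × (j,j+1) is at most 4·L. -/

import Mathlib

open scoped ENNReal
open Set

/-- The open unit grid square with lower-left corner `(i, j)`. -/
def openGridSquare (i j : ℤ) : Set (EuclideanSpace ℝ (Fin 2)) :=
  {p | p 0 ∈ Set.Ioo (i : ℝ) (i + 1) ∧ p 1 ∈ Set.Ioo (j : ℝ) (j + 1)}

namespace CCMFS


lemma abs_coord_le_dist (p q : EuclideanSpace ℝ (Fin 2)) (i : Fin 2) :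
    |p i - q i| ≤ dist p q := by
  rw [EuclideanSpace.dist_eq, ← Real.sqrt_sq_eq_abs]
  apply Real.sqrt_le_sqrt
  have := Finset.single_le_sum (f := fun j => dist (p j) (q j) ^ 2)
    (fun j _ => sq_nonneg _) (Finset.mem_univ i)
  simpa [Real.dist_eq, sq_abs] using this

lemma l1_le_dist (p q : EuclideanSpace ℝ (Fin 2)) :
    |p 0 - q 0| + |p 1 - q 1| ≤ Real.sqrt 2 * dist p q := by
  have hd : dist p q = Real.sqrt ((p 0 - q 0)^2 + (p 1 - q 1)^2) := by
    rw [EuclideanSpace.dist_eq, Fin.sum_univ_two]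
    norm_num [Real.dist_eq, sq_abs]
  rw [hd, ← Real.sqrt_mul (by norm_num : (0:ℝ) ≤ 2)]
  rw [← Real.sqrt_sq (by positivity : (0:ℝ) ≤ |p 0 - q 0| + |p 1 - q 1|)]
  apply Real.sqrt_le_sqrt
  nlinarith [sq_nonneg (|p 0 - q 0| - |p 1 - q 1|), sq_abs (p 0 - q 0), sq_abs (p 1 - q 1),
    abs_nonneg (p 0 - q 0), abs_nonneg (p 1 - q 1)]

lemma chain5 (z : ℕ → ℝ) (hz : z 5 = z 0) {j k : ℕ} (hj : j ≤ 5) (hk : k ≤ 5) :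
    2 * (z j - z k) ≤ ∑ i ∈ Finset.range 5, |z (i+1) - z i| := by
  have a0 := le_abs_self (z 1 - z 0); have b0 := neg_abs_le (z 1 - z 0)
  have a1 := le_abs_self (z 2 - z 1); have b1 := neg_abs_le (z 2 - z 1)
  have a2 := le_abs_self (z 3 - z 2); have b2 := neg_abs_le (z 3 - z 2)
  have a3 := le_abs_self (z 4 - z 3); have b3 := neg_abs_le (z 4 - z 3)
  have a4 := le_abs_self (z 5 - z 4); have b4 := neg_abs_le (z 5 - z 4)
  simp only [Finset.sum_range_succ, Finset.sum_range_zero]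
  interval_cases j <;> interval_cases k <;> linarith

lemma encard_biUnion_le {ι α : Type*} (t : Finset ι) (f : ι → Set α) :
    (⋃ i ∈ t, f i).encard ≤ ∑ i ∈ t, (f i).encard := by
  classical
  induction t using Finset.induction_on with
  | empty => simp
  | @insert a s h ih =>
      rw [Finset.set_biUnion_insert, Finset.sum_insert h]
      exact (Set.encard_union_le _ _).trans (by gcongr)

lemma encard_le_four {α : Type*} (a b c d : α) : ({a,b,c,d} : Set α).encard ≤ 4 := by
  refine le_trans (Set.encard_insert_le _ _) ?_
  refine le_trans (add_le_add_left (Set.encard_insert_le _ _) 1) ?_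
  refine le_trans (add_le_add_left (add_le_add_left (Set.encard_insert_le _ _) 1) 1) ?_
  simp [Set.encard_singleton]
  rfl

lemma encard_diff_le_three {α : Type*} {X : Set α} {a : α} (ha : a ∈ X) (hX : X.encard ≤ 4) :
    (X \ {a}).encard ≤ 3 := by
  have h := Set.encard_diff_singleton_add_one ha
  have : (X \ {a}).encard + 1 ≤ 3 + 1 := by rw [h]; exact hX
  exact (WithTop.add_le_add_iff_right (by simp : (1:ℕ∞) ≠ ⊤)).mp this

lemma exists_block {P : Set (ℤ × ℤ)} (hne : P.Nonempty)
    (h1 : ∀ p ∈ P, ∀ q ∈ P, p.1 ≤ q.1 + 1)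
    (h2 : ∀ p ∈ P, ∀ q ∈ P, p.2 ≤ q.2 + 1) :
    ∃ a b : ℤ, ∀ p ∈ P, (a ≤ p.1 ∧ p.1 ≤ a + 1) ∧ (b ≤ p.2 ∧ p.2 ≤ b + 1) := by
  classical
  obtain ⟨p₀, hp₀⟩ := hne
  have key : ∀ f : ℤ × ℤ → ℤ, (∀ p ∈ P, ∀ q ∈ P, f p ≤ f q + 1) →
      ∃ a : ℤ, ∀ p ∈ P, a ≤ f p ∧ f p ≤ a + 1 := by
    intro f hf
    by_cases hex : ∃ p ∈ P, f p = f p₀ - 1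
    · obtain ⟨p₁, hp₁, hfp₁⟩ := hex
      refine ⟨f p₀ - 1, fun p hp => ⟨?_, ?_⟩⟩
      · have := hf p₀ hp₀ p hp; omega
      · have := hf p hp p₁ hp₁; omega
    · push_neg at hex
      refine ⟨f p₀, fun p hp => ⟨?_, hf p hp p₀ hp₀⟩⟩
      have h1' := hf p₀ hp₀ p hp
      have h2' := hex p hp
      omega
  obtain ⟨a, ha⟩ := key Prod.fst h1
  obtain ⟨b, hb⟩ := key Prod.snd h2
  exact ⟨a, b, fun p hp => ⟨ha p hp, hb p hp⟩⟩

lemma col_le {i i' : ℤ} {x x' : ℝ} (hx : x ∈ Set.Ioo (i:ℝ) (i+1))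
    (hx' : x' ∈ Set.Ioo (i':ℝ) (i'+1)) (h : x - x' ≤ 1) : i ≤ i' + 1 := by
  by_contra hc
  push_neg at hc
  have h2 : i' + 2 ≤ i := by omega
  have : ((i' : ℝ) + 2) ≤ (i : ℝ) := by exact_mod_cast h2
  obtain ⟨hx1, hx2⟩ := hx; obtain ⟨hx1', hx2'⟩ := hx'
  linarith

lemma col_window {i : ℤ} {x qx : ℝ} (hx : x ∈ Set.Ioo (i:ℝ) (i+1)) (h : |x - qx| ≤ 1) :
    ⌊qx⌋ - 1 ≤ i ∧ i ≤ (⌊qx⌋ - 1) + 2 := by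
  obtain ⟨hx1, hx2⟩ := hx
  rw [abs_le] at h
  have hf1 : (⌊qx⌋ : ℝ) ≤ qx := Int.floor_le qx
  have hf2 : qx < ⌊qx⌋ + 1 := Int.lt_floor_add_one qx
  constructor
  · have h3 : ((⌊qx⌋ : ℝ) - 1) < (i : ℝ) + 1 := by linarith
    have h4 : ⌊qx⌋ - 1 < i + 1 := by exact_mod_cast h3
    omega
  · have h3 : (i : ℝ) < (⌊qx⌋ : ℝ) + 2 := by linarith
    have h4 : i < ⌊qx⌋ + 2 := by exact_mod_cast h3
    omega



noncomputable def arcl (γ : ℝ → EuclideanSpace ℝ (Fin 2)) (t : ℝ) : ℝ :=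
  (eVariationOn γ (Set.Icc 0 t)).toReal

variable {γ : ℝ → EuclideanSpace ℝ (Fin 2)} {L : ℝ}

lemma evar_ne_top (hlen : eVariationOn γ (Set.Icc 0 1) = ENNReal.ofReal L)
    {s t : ℝ} (hs : 0 ≤ s) (ht : t ≤ 1) : eVariationOn γ (Set.Icc s t) ≠ ⊤ := by
  have h := eVariationOn.mono γ (Set.Icc_subset_Icc hs ht : Set.Icc s t ⊆ Set.Icc 0 1)
  exact ne_top_of_le_ne_top (by simp [hlen]) h

lemma arcl_zero : arcl γ 0 = 0 := by
  rw [arcl, Set.Icc_self, eVariationOn.subsingleton γ Set.subsingleton_singleton]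
  rfl

lemma arcl_one (hlen : eVariationOn γ (Set.Icc 0 1) = ENNReal.ofReal L) (hL0 : 0 ≤ L) :
    arcl γ 1 = L := by
  rw [arcl, hlen, ENNReal.toReal_ofReal hL0]

lemma arcl_mono (hlen : eVariationOn γ (Set.Icc 0 1) = ENNReal.ofReal L)
    {s t : ℝ} (hst : s ≤ t) (ht : t ≤ 1) : arcl γ s ≤ arcl γ t :=
  ENNReal.toReal_mono (evar_ne_top hlen le_rfl ht) (eVariationOn.mono γ (Set.Icc_subset_Icc le_rfl hst))

lemma arcl_nonneg (t : ℝ) : 0 ≤ arcl γ t := ENNReal.toReal_nonneg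

lemma arcl_le (hlen : eVariationOn γ (Set.Icc 0 1) = ENNReal.ofReal L) (hL0 : 0 ≤ L)
    {t : ℝ} (ht : t ≤ 1) : arcl γ t ≤ L := by
  rw [← arcl_one hlen hL0]
  exact ENNReal.toReal_mono (by simp [hlen]) (eVariationOn.mono γ (Set.Icc_subset_Icc le_rfl ht))

lemma dist_le_arcl (hlen : eVariationOn γ (Set.Icc 0 1) = ENNReal.ofReal L)
    {s t : ℝ} (hs : s ∈ Set.Icc (0:ℝ) 1) (ht : t ∈ Set.Icc (0:ℝ) 1) (hst : s ≤ t) :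
    dist (γ s) (γ t) ≤ arcl γ t - arcl γ s := by
  have e1 : Set.Icc (0:ℝ) 1 ∩ Set.Icc 0 s = Set.Icc 0 s :=
    Set.inter_eq_self_of_subset_right (Set.Icc_subset_Icc le_rfl (hst.trans ht.2))
  have e2 : Set.Icc (0:ℝ) 1 ∩ Set.Icc s t = Set.Icc s t :=
    Set.inter_eq_self_of_subset_right (Set.Icc_subset_Icc hs.1 ht.2)
  have e3 : Set.Icc (0:ℝ) 1 ∩ Set.Icc 0 t = Set.Icc 0 t :=
    Set.inter_eq_self_of_subset_right (Set.Icc_subset_Icc le_rfl ht.2)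
  have hadd := eVariationOn.Icc_add_Icc γ (s := Set.Icc (0:ℝ) 1) hs.1 hst ⟨hs.1, hs.2⟩
  rw [e1, e2, e3] at hadd
  have hf1 := evar_ne_top hlen (le_refl (0:ℝ)) (hst.trans ht.2)
  have hf2 := evar_ne_top hlen hs.1 ht.2
  have htr := congrArg ENNReal.toReal hadd
  rw [ENNReal.toReal_add hf1 hf2] at htr
  have hd : edist (γ s) (γ t) ≤ eVariationOn γ (Set.Icc s t) :=
    eVariationOn.edist_le γ ⟨le_rfl, hst⟩ ⟨hst, le_rfl⟩
  have : dist (γ s) (γ t) ≤ (eVariationOn γ (Set.Icc s t)).toReal := by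
    rw [dist_edist]; exact ENNReal.toReal_mono hf2 hd
  have h0 : arcl γ s + (eVariationOn γ (Set.Icc s t)).toReal = arcl γ t := htr
  linarith

lemma dist_le_abs_arcl (hlen : eVariationOn γ (Set.Icc 0 1) = ENNReal.ofReal L)
    {s t : ℝ} (hs : s ∈ Set.Icc (0:ℝ) 1) (ht : t ∈ Set.Icc (0:ℝ) 1) :
    dist (γ s) (γ t) ≤ |arcl γ s - arcl γ t| := by
  rcases le_total s t with h | h
  · rw [abs_sub_comm]
    exact (dist_le_arcl hlen hs ht h).trans (le_abs_self _)
  · rw [dist_comm]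
    exact (dist_le_arcl hlen ht hs h).trans (le_abs_self _)

lemma dist_le_half (hlen : eVariationOn γ (Set.Icc 0 1) = ENNReal.ofReal L) (hL0 : 0 ≤ L)
    (hclosed : γ 0 = γ 1)
    {s t : ℝ} (hs : s ∈ Set.Icc (0:ℝ) 1) (ht : t ∈ Set.Icc (0:ℝ) 1) :
    dist (γ s) (γ t) ≤ L / 2 := by
  wlog hst : s ≤ t generalizing s t
  · rw [dist_comm]; exact this ht hs (le_of_not_ge hst)
  have h1 : dist (γ s) (γ t) ≤ arcl γ t - arcl γ s := dist_le_arcl hlen hs ht hst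
  have h2 : dist (γ 0) (γ s) ≤ arcl γ s - arcl γ 0 :=
    dist_le_arcl hlen ⟨le_rfl, zero_le_one⟩ hs hs.1
  have h3 : dist (γ t) (γ 1) ≤ arcl γ 1 - arcl γ t :=
    dist_le_arcl hlen ht ⟨zero_le_one, le_rfl⟩ ht.2
  have h4 : dist (γ s) (γ t) ≤ dist (γ s) (γ 0) + dist (γ 1) (γ t) := by
    rw [hclosed]
    exact dist_triangle _ _ _
  rw [dist_comm (γ s) (γ 0), dist_comm (γ 1) (γ t)] at h4
  rw [arcl_zero] at h2
  rw [arcl_one hlen hL0] at h3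
  linarith

lemma exists_anchor (hcont : ContinuousOn γ (Set.Icc 0 1))
    (hlen : eVariationOn γ (Set.Icc 0 1) = ENNReal.ofReal L)
    {c : ℝ} (hc : 0 ≤ c) :
    ∃ q : EuclideanSpace ℝ (Fin 2), ∀ t ∈ Set.Icc (0:ℝ) 1, dist (γ t) q ≤ |arcl γ t - c| := by
  classical
  set T := {t | t ∈ Set.Icc (0:ℝ) 1 ∧ arcl γ t ≤ c} with hT
  have h0T : (0:ℝ) ∈ T := ⟨⟨le_rfl, zero_le_one⟩, by rw [arcl_zero]; exact hc⟩
  have hTne : T.Nonempty := ⟨0, h0T⟩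
  have hbdd : BddAbove T := ⟨1, fun x hx => hx.1.2⟩
  set t₀ := sSup T with ht₀def
  have ht₀ : t₀ ∈ Set.Icc (0:ℝ) 1 := ⟨le_csSup hbdd h0T, csSup_le hTne fun x hx => hx.1.2⟩
  refine ⟨γ t₀, fun t ht => ?_⟩
  refine le_of_forall_pos_le_add fun ε hε => ?_
  obtain ⟨δ, hδpos, hδ⟩ := Metric.continuousWithinAt_iff.mp (hcont t₀ ht₀) ε hε
  by_cases hcase : arcl γ t ≤ c
  · have htT : t ∈ T := ⟨ht, hcase⟩
    have htt₀ : t ≤ t₀ := le_csSup hbdd htT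
    obtain ⟨t₁, ht₁T, ht₁⟩ := exists_lt_of_lt_csSup hTne (sub_lt_self t₀ hδpos)
    set t' := max t₁ t with ht'def
    have ht'T : t' ∈ T := by
      rcases max_cases t₁ t with ⟨he, _⟩ | ⟨he, _⟩ <;> rw [ht'def, he]
      · exact ht₁T
      · exact htT
    have ht'le : t' ≤ t₀ := le_csSup hbdd ht'T
    have hdist : dist t' t₀ < δ := by
      rw [Real.dist_eq, abs_of_nonpos (by linarith)]
      have : t₀ - δ < t' := lt_of_lt_of_le ht₁ (le_max_left _ _)
      linarith
    have h2 : dist (γ t') (γ t₀) < ε := hδ ht'T.1 hdist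
    have h1 : dist (γ t) (γ t') ≤ arcl γ t' - arcl γ t :=
      dist_le_arcl hlen ht ht'T.1 (le_max_right _ _)
    have h3 : arcl γ t' ≤ c := ht'T.2
    calc dist (γ t) (γ t₀) ≤ dist (γ t) (γ t') + dist (γ t') (γ t₀) := dist_triangle _ _ _
      _ ≤ (arcl γ t' - arcl γ t) + ε := by linarith
      _ ≤ (c - arcl γ t) + ε := by linarith
      _ ≤ |arcl γ t - c| + ε := by
          have : c - arcl γ t ≤ |arcl γ t - c| := by rw [abs_sub_comm]; exact le_abs_self _
          linarith
  · push_neg at hcase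
    have ht₀t : t₀ ≤ t := by
      by_contra hlt
      push_neg at hlt
      obtain ⟨t₁, ht₁T, ht₁⟩ := exists_lt_of_lt_csSup hTne hlt
      have : arcl γ t ≤ arcl γ t₁ := arcl_mono hlen (le_of_lt ht₁) ht₁T.1.2
      exact absurd (this.trans ht₁T.2) (not_le.mpr hcase)
    rcases eq_or_lt_of_le ht₀t with heq | hlt
    · rw [← heq, dist_self]
      positivity
    · set t' := min t (t₀ + δ/2) with ht'def
      have ht't₀ : t₀ < t' := lt_min hlt (by linarith)
      have ht'le : t' ≤ t := min_le_left _ _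
      have ht'mem : t' ∈ Set.Icc (0:ℝ) 1 := ⟨le_trans ht₀.1 (le_of_lt ht't₀), ht'le.trans ht.2⟩
      have harc : c ≤ arcl γ t' := by
        by_contra hh
        push_neg at hh
        have : t' ∈ T := ⟨ht'mem, le_of_lt hh⟩
        exact absurd (le_csSup hbdd this) (not_le.mpr ht't₀)
      have hdist : dist t' t₀ < δ := by
        rw [Real.dist_eq, abs_of_nonneg (by linarith)]
        have : t' ≤ t₀ + δ/2 := min_le_right _ _
        linarith
      have h2 : dist (γ t') (γ t₀) < ε := hδ ht'mem hdist
      have h1 : dist (γ t') (γ t) ≤ arcl γ t - arcl γ t' :=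
        dist_le_arcl hlen ht'mem ht ht'le
      calc dist (γ t) (γ t₀) ≤ dist (γ t) (γ t') + dist (γ t') (γ t₀) := dist_triangle _ _ _
        _ ≤ (arcl γ t - arcl γ t') + ε := by rw [dist_comm (γ t) (γ t')]; linarith
        _ ≤ (arcl γ t - c) + ε := by linarith
        _ ≤ |arcl γ t - c| + ε := by
            have : arcl γ t - c ≤ |arcl γ t - c| := le_abs_self _
            linarith



variable {γ : ℝ → EuclideanSpace ℝ (Fin 2)} {L : ℝ}

lemma l1_le_dist' (p q : EuclideanSpace ℝ (Fin 2)) :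
    |p 0 - q 0| + |p 1 - q 1| ≤ Real.sqrt 2 * dist p q := by
  have hd : dist p q = Real.sqrt ((p 0 - q 0)^2 + (p 1 - q 1)^2) := by
    rw [EuclideanSpace.dist_eq, Fin.sum_univ_two]
    norm_num [Real.dist_eq, sq_abs]
  rw [hd, ← Real.sqrt_mul (by norm_num : (0:ℝ) ≤ 2)]
  rw [← Real.sqrt_sq (by positivity : (0:ℝ) ≤ |p 0 - q 0| + |p 1 - q 1|)]
  apply Real.sqrt_le_sqrt
  nlinarith [sq_nonneg (|p 0 - q 0| - |p 1 - q 1|), sq_abs (p 0 - q 0), sq_abs (p 1 - q 1),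
    abs_nonneg (p 0 - q 0), abs_nonneg (p 1 - q 1)]


lemma tour (hclosed : γ 0 = γ 1)
    (hlen : eVariationOn γ (Set.Icc 0 1) = ENNReal.ofReal L) (hL0 : 0 ≤ L)
    (t : Fin 4 → ℝ) (ht : ∀ i, t i ∈ Set.Icc (0:ℝ) 1) :
    2 * (γ (t 1) 0 - γ (t 0) 0) + 2 * (γ (t 3) 1 - γ (t 2) 1) ≤ Real.sqrt 2 * L := by
  classical
  set σ := Tuple.sort t with hσ
  set g : Fin 4 → ℝ := t ∘ σ with hg
  have hgmono : Monotone g := Tuple.monotone_sort t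
  have hgmem : ∀ i, g i ∈ Set.Icc (0:ℝ) 1 := fun i => ht (σ i)
  set w : ℕ → ℝ := fun n => if n = 0 then 0 else if n = 1 then g 0 else if n = 2 then g 1
    else if n = 3 then g 2 else if n = 4 then g 3 else 1 with hwdef
  have hw0 : w 0 = 0 := rfl
  have hw5 : ∀ n, 5 ≤ n → w n = 1 := by
    intro n hn
    simp only [hwdef]
    rw [if_neg (by omega), if_neg (by omega), if_neg (by omega), if_neg (by omega),
      if_neg (by omega)]
  have hwg : ∀ k : Fin 4, w (k.val + 1) = g k := by
    intro k
    fin_cases k <;> rfl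
  have hwmono : Monotone w := by
    apply monotone_nat_of_le_succ
    intro n
    match n with
    | 0 => exact (hgmem 0).1
    | 1 => exact hgmono (by decide : (0:Fin 4) ≤ 1)
    | 2 => exact hgmono (by decide : (1:Fin 4) ≤ 2)
    | 3 => exact hgmono (by decide : (2:Fin 4) ≤ 3)
    | 4 => exact (hgmem 3).2
    | (n+5) => rw [hw5 (n+5) (by omega), hw5 (n+6) (by omega)]
  have hwmem : ∀ n, w n ∈ Set.Icc (0:ℝ) 1 := by
    intro n
    match n with
    | 0 => exact ⟨le_rfl, zero_le_one⟩
    | 1 => exact hgmem 0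
    | 2 => exact hgmem 1
    | 3 => exact hgmem 2
    | 4 => exact hgmem 3
    | (n+5) => rw [hw5 (n+5) (by omega)]; exact ⟨zero_le_one, le_rfl⟩
  have hsum := eVariationOn.sum_le (f := γ) (n := 5) hwmono hwmem
  rw [hlen] at hsum
  have hreal : ∑ i ∈ Finset.range 5, dist (γ (w (i+1))) (γ (w i)) ≤ L := by
    have h1 : ENNReal.ofReal (∑ i ∈ Finset.range 5, dist (γ (w (i+1))) (γ (w i)))
        = ∑ i ∈ Finset.range 5, edist (γ (w (i+1))) (γ (w i)) := by
      rw [ENNReal.ofReal_sum_of_nonneg (fun i _ => dist_nonneg)]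
      exact Finset.sum_congr rfl fun i _ => (edist_dist _ _).symm
    exact (ENNReal.ofReal_le_ofReal_iff hL0).mp (h1 ▸ hsum)
  set zx : ℕ → ℝ := fun n => γ (w n) 0 with hzx
  set zy : ℕ → ℝ := fun n => γ (w n) 1 with hzy
  have hzx5 : zx 5 = zx 0 := by simp only [hzx, hw5 5 le_rfl, hw0, hclosed]
  have hzy5 : zy 5 = zy 0 := by simp only [hzy, hw5 5 le_rfl, hw0, hclosed]
  have hxy : ∑ i ∈ Finset.range 5, |zx (i+1) - zx i|
      + ∑ i ∈ Finset.range 5, |zy (i+1) - zy i| ≤ Real.sqrt 2 * L := by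
    rw [← Finset.sum_add_distrib]
    calc ∑ i ∈ Finset.range 5, (|zx (i+1) - zx i| + |zy (i+1) - zy i|)
        ≤ ∑ i ∈ Finset.range 5, Real.sqrt 2 * dist (γ (w (i+1))) (γ (w i)) :=
          Finset.sum_le_sum fun i _ => l1_le_dist _ _
      _ = Real.sqrt 2 * ∑ i ∈ Finset.range 5, dist (γ (w (i+1))) (γ (w i)) := by
          rw [Finset.mul_sum]
      _ ≤ Real.sqrt 2 * L := by
          exact mul_le_mul_of_nonneg_left hreal (Real.sqrt_nonneg 2)
  have hidx : ∀ i : Fin 4, ∃ k : Fin 4, w (k.val + 1) = t i := by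
    intro i
    refine ⟨σ.symm i, ?_⟩
    rw [hwg]
    simp [hg]
  obtain ⟨k0, hk0⟩ := hidx 0
  obtain ⟨k1, hk1⟩ := hidx 1
  obtain ⟨k2, hk2⟩ := hidx 2
  obtain ⟨k3, hk3⟩ := hidx 3
  have hx : 2 * (γ (t 1) 0 - γ (t 0) 0) ≤ ∑ i ∈ Finset.range 5, |zx (i+1) - zx i| := by
    have h := chain5 zx hzx5 (j := k1.val + 1) (k := k0.val + 1)
      (by have := k1.isLt; omega) (by have := k0.isLt; omega)
    have e1 : zx (k1.val + 1) = γ (t 1) 0 := by rw [hzx]; simp only; rw [hk1]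
    have e2 : zx (k0.val + 1) = γ (t 0) 0 := by rw [hzx]; simp only; rw [hk0]
    rwa [e1, e2] at h
  have hy : 2 * (γ (t 3) 1 - γ (t 2) 1) ≤ ∑ i ∈ Finset.range 5, |zy (i+1) - zy i| := by
    have h := chain5 zy hzy5 (j := k3.val + 1) (k := k2.val + 1)
      (by have := k3.isLt; omega) (by have := k2.isLt; omega)
    have e1 : zy (k3.val + 1) = γ (t 3) 1 := by rw [hzy]; simp only; rw [hk3]
    have e2 : zy (k2.val + 1) = γ (t 2) 1 := by rw [hzy]; simp only; rw [hk2]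
    rwa [e1, e2] at h
  linarith


end CCMFS

set_option maxHeartbeats 1000000 in
theorem closed_curve_meets_few_squares (γ : ℝ → EuclideanSpace ℝ (Fin 2)) (L : ℝ)
    (hcont : ContinuousOn γ (Set.Icc 0 1)) (hclosed : γ 0 = γ 1)
    (hlen : eVariationOn γ (Set.Icc 0 1) = ENNReal.ofReal L) (hL : 1 < L) :
    {ij : ℤ × ℤ | (γ '' Set.Icc 0 1 ∩ openGridSquare ij.1 ij.2).Nonempty}.encard
      ≤ ENNReal.ofReal (4 * L) := by
  classical
  have hL0 : (0:ℝ) ≤ L := by linarith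
  set S := {ij : ℤ × ℤ | (γ '' Set.Icc 0 1 ∩ openGridSquare ij.1 ij.2).Nonempty} with hSdef
  suffices h : ∃ n : ℕ, S.encard ≤ (n:ℕ∞) ∧ (n:ℝ) ≤ 4*L by
    obtain ⟨n, h1, h2⟩ := h
    have h3 : ((S.encard : ℕ∞) : ℝ≥0∞) ≤ ((n:ℕ∞) : ℝ≥0∞) := by exact_mod_cast h1
    refine le_trans h3 ?_
    rw [ENat.toENNReal_coe, ← ENNReal.ofReal_natCast]
    exact ENNReal.ofReal_le_ofReal h2
  have hrep : ∀ ij : ℤ × ℤ, ij ∈ S → ∃ u : ℝ, u ∈ Set.Icc (0:ℝ) 1 ∧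
      γ u ∈ openGridSquare ij.1 ij.2 := by
    rintro ij ⟨p, ⟨t, ht, rfl⟩, hp⟩
    exact ⟨t, ht, hp⟩
  choose! τ hτmem hτsq using hrep
  have hsq1 : ∀ ij ∈ S, γ (τ ij) 0 ∈ Set.Ioo (ij.1:ℝ) (ij.1+1) := fun ij h => (hτsq ij h).1
  have hsq2 : ∀ ij ∈ S, γ (τ ij) 1 ∈ Set.Ioo (ij.2:ℝ) (ij.2+1) := fun ij h => (hτsq ij h).2
  rcases S.eq_empty_or_nonempty with hSe | hSne
  · exact ⟨0, by simp [hSe], by norm_num; linarith⟩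
  obtain ⟨ij₀, hij₀⟩ := hSne
  rcases lt_or_ge L 2 with hL2 | hL2
  · -- small regime: diameter < 1
    have hpair1 : ∀ p ∈ S, ∀ q ∈ S, p.1 ≤ q.1 + 1 := by
      intro p hp q hq
      have hd : dist (γ (τ p)) (γ (τ q)) ≤ L/2 :=
        CCMFS.dist_le_half hlen hL0 hclosed (hτmem p hp) (hτmem q hq)
      have habs := (CCMFS.abs_coord_le_dist (γ (τ p)) (γ (τ q)) 0).trans hd
      obtain ⟨hb1, hb2⟩ := abs_le.mp habs
      exact CCMFS.col_le (hsq1 p hp) (hsq1 q hq) (by linarith)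
    have hpair2 : ∀ p ∈ S, ∀ q ∈ S, p.2 ≤ q.2 + 1 := by
      intro p hp q hq
      have hd : dist (γ (τ p)) (γ (τ q)) ≤ L/2 :=
        CCMFS.dist_le_half hlen hL0 hclosed (hτmem p hp) (hτmem q hq)
      have habs := (CCMFS.abs_coord_le_dist (γ (τ p)) (γ (τ q)) 1).trans hd
      obtain ⟨hb1, hb2⟩ := abs_le.mp habs
      exact CCMFS.col_le (hsq2 p hp) (hsq2 q hq) (by linarith)
    obtain ⟨a, b, hab⟩ := CCMFS.exists_block ⟨ij₀, hij₀⟩ hpair1 hpair2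
    refine ⟨4, ?_, by push_cast; linarith⟩
    have hsub : S ⊆ ({(a,b),(a,b+1),(a+1,b),(a+1,b+1)} : Set (ℤ×ℤ)) := by
      intro p hp
      obtain ⟨⟨h1,h2⟩,h3,h4⟩ := hab p hp
      have hi : p.1 = a ∨ p.1 = a+1 := by omega
      have hj : p.2 = b ∨ p.2 = b+1 := by omega
      rcases hi with hi|hi <;> rcases hj with hj|hj <;>
        simp [Set.mem_insert_iff, Prod.ext_iff, hi, hj]
    exact le_trans (Set.encard_mono hsub)
      (by exact_mod_cast CCMFS.encard_le_four (a,b) (a,b+1) (a+1,b) (a+1,b+1))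
  rcases le_or_gt L 16 with hL16 | hL16
  · -- middle regime: product bound via 4-point tour
    have hs2 : Real.sqrt 2 ≤ 1.42 := by
      nlinarith [Real.sq_sqrt (by norm_num : (0:ℝ) ≤ 2), Real.sqrt_nonneg 2]
    have htour : ∀ p ∈ S, ∀ p' ∈ S, ∀ r ∈ S, ∀ r' ∈ S,
        2*((p'.1:ℝ) - p.1 - 1) + 2*((r'.2:ℝ) - r.2 - 1) ≤ Real.sqrt 2 * L := by
      intro p hp p' hp' r hr r' hr'
      have h := CCMFS.tour hclosed hlen hL0 ![τ p, τ p', τ r, τ r'] (by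
        intro i
        fin_cases i
        · exact hτmem p hp
        · exact hτmem p' hp'
        · exact hτmem r hr
        · exact hτmem r' hr')
      have e0 : (![τ p, τ p', τ r, τ r'] : Fin 4 → ℝ) 0 = τ p := rfl
      have e1 : (![τ p, τ p', τ r, τ r'] : Fin 4 → ℝ) 1 = τ p' := rfl
      have e2 : (![τ p, τ p', τ r, τ r'] : Fin 4 → ℝ) 2 = τ r := rfl
      have e3 : (![τ p, τ p', τ r, τ r'] : Fin 4 → ℝ) 3 = τ r' := rfl
      rw [e0, e1, e2, e3] at h
      obtain ⟨ha1, ha2⟩ := hsq1 p hp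
      obtain ⟨hb1, hb2⟩ := hsq1 p' hp'
      obtain ⟨hc1, hc2⟩ := hsq2 r hr
      obtain ⟨hd1, hd2⟩ := hsq2 r' hr'
      linarith
    -- bounds for least/greatest
    have hbd1 : ∀ z : ℤ, (∃ p ∈ S, p.1 = z) → ij₀.1 - 14 ≤ z := by
      rintro z ⟨p, hp, rfl⟩
      have h := htour p hp ij₀ hij₀ ij₀ hij₀ ij₀ hij₀
      have hsl : Real.sqrt 2 * L ≤ 1.42 * L := mul_le_mul_of_nonneg_right hs2 hL0
      have : ((ij₀.1 - 14 : ℤ) : ℝ) ≤ (p.1 : ℝ) := by push_cast; nlinarith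
      exact_mod_cast this
    have hbd2 : ∀ z : ℤ, (∃ p ∈ S, p.1 = z) → z ≤ ij₀.1 + 14 := by
      rintro z ⟨p, hp, rfl⟩
      have h := htour ij₀ hij₀ p hp ij₀ hij₀ ij₀ hij₀
      have hsl : Real.sqrt 2 * L ≤ 1.42 * L := mul_le_mul_of_nonneg_right hs2 hL0
      have : (p.1 : ℝ) ≤ ((ij₀.1 + 14 : ℤ) : ℝ) := by push_cast; nlinarith
      exact_mod_cast this
    have hbd3 : ∀ z : ℤ, (∃ p ∈ S, p.2 = z) → ij₀.2 - 14 ≤ z := by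
      rintro z ⟨p, hp, rfl⟩
      have h := htour ij₀ hij₀ ij₀ hij₀ p hp ij₀ hij₀
      have hsl : Real.sqrt 2 * L ≤ 1.42 * L := mul_le_mul_of_nonneg_right hs2 hL0
      have : ((ij₀.2 - 14 : ℤ) : ℝ) ≤ (p.2 : ℝ) := by push_cast; nlinarith
      exact_mod_cast this
    have hbd4 : ∀ z : ℤ, (∃ p ∈ S, p.2 = z) → z ≤ ij₀.2 + 14 := by
      rintro z ⟨p, hp, rfl⟩
      have h := htour ij₀ hij₀ ij₀ hij₀ ij₀ hij₀ p hp
      have hsl : Real.sqrt 2 * L ≤ 1.42 * L := mul_le_mul_of_nonneg_right hs2 hL0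
      have : (p.2 : ℝ) ≤ ((ij₀.2 + 14 : ℤ) : ℝ) := by push_cast; nlinarith
      exact_mod_cast this
    obtain ⟨α, ⟨pa, hpa, hpa1⟩, hαle⟩ :=
      Int.exists_least_of_bdd ⟨ij₀.1 - 14, hbd1⟩ ⟨ij₀.1, ij₀, hij₀, rfl⟩
    obtain ⟨α', ⟨pb, hpb, hpb1⟩, hαge⟩ :=
      Int.exists_greatest_of_bdd ⟨ij₀.1 + 14, hbd2⟩ ⟨ij₀.1, ij₀, hij₀, rfl⟩
    obtain ⟨β, ⟨pc, hpc, hpc1⟩, hβle⟩ :=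
      Int.exists_least_of_bdd ⟨ij₀.2 - 14, hbd3⟩ ⟨ij₀.2, ij₀, hij₀, rfl⟩
    obtain ⟨β', ⟨pd, hpd, hpd1⟩, hβge⟩ :=
      Int.exists_greatest_of_bdd ⟨ij₀.2 + 14, hbd4⟩ ⟨ij₀.2, ij₀, hij₀, rfl⟩
    have hkey : 2*((α':ℝ) - α - 1) + 2*((β':ℝ) - β - 1) ≤ Real.sqrt 2 * L := by
      have h := htour pa hpa pb hpb pc hpc pd hpd
      rw [hpa1, hpb1, hpc1, hpd1] at h
      exact h
    have hαα : α ≤ α' := hαge α ⟨pa, hpa, hpa1⟩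
    have hββ : β ≤ β' := hβge β ⟨pc, hpc, hpc1⟩
    refine ⟨(Finset.Icc α α' ×ˢ Finset.Icc β β').card, ?_, ?_⟩
    · rw [← Set.encard_coe_eq_coe_finsetCard]
      refine Set.encard_mono ?_
      intro p hp
      simp only [Finset.coe_product, Set.mem_prod, Finset.coe_Icc, Set.mem_Icc]
      exact ⟨⟨hαle p.1 ⟨p, hp, rfl⟩, hαge p.1 ⟨p, hp, rfl⟩⟩,
        ⟨hβle p.2 ⟨p, hp, rfl⟩, hβge p.2 ⟨p, hp, rfl⟩⟩⟩
    · rw [Finset.card_product, Nat.cast_mul]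
      rw [Int.card_Icc, Int.card_Icc]
      have ha : (((α' + 1 - α).toNat : ℕ) : ℝ) = (α':ℝ) - α + 1 := by
        rw [show (((α' + 1 - α).toNat : ℕ) : ℝ) = (((α' + 1 - α).toNat : ℤ) : ℝ) by push_cast; ring,
          Int.toNat_of_nonneg (by omega)]
        push_cast; ring
      have hb : (((β' + 1 - β).toNat : ℕ) : ℝ) = (β':ℝ) - β + 1 := by
        rw [show (((β' + 1 - β).toNat : ℕ) : ℝ) = (((β' + 1 - β).toNat : ℤ) : ℝ) by push_cast; ring,
          Int.toNat_of_nonneg (by omega)]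
        push_cast; ring
      rw [ha, hb]
      set u : ℝ := (α':ℝ) - α with hu
      set v : ℝ := (β':ℝ) - β with hv
      clear_value u v
      have hu0 : 0 ≤ u := by
        rw [hu]; have : (α:ℝ) ≤ (α':ℝ) := by exact_mod_cast hαα
        linarith
      have hv0 : 0 ≤ v := by
        rw [hv]; have : (β:ℝ) ≤ (β':ℝ) := by exact_mod_cast hββ
        linarith
      have hsl : Real.sqrt 2 * L ≤ 1.42 * L := mul_le_mul_of_nonneg_right hs2 hL0
      have hw : u + v ≤ 0.71 * L + 2 := by linarith
      have key4 : (u+1)*(v+1)*4 ≤ (u+v+2)^2 := by nlinarith [sq_nonneg (u-v)]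
      have h2 : (u+v+2)^2 ≤ (0.71*L+4)^2 := by
        have := pow_le_pow_left₀ (a := u+v+2) (b := 0.71*L+4) (by linarith) (by linarith) 2
        exact this
      have h3 : (0.71*L+4)^2 ≤ 16*L := by
        nlinarith [mul_nonneg (by linarith : (0:ℝ) ≤ L - 2) (by linarith : (0:ℝ) ≤ 16 - L)]
      linarith
  · -- large regime: fibers of arclength 2
    set M : ℤ := ⌊L/2⌋ with hMdef
    have hM0 : (0:ℤ) ≤ M := Int.le_floor.mpr (by norm_num; linarith)
    set F : ℤ → Set (ℤ×ℤ) := fun m => {ij | ij ∈ S ∧ ⌊CCMFS.arcl γ (τ ij) / 2⌋ = m} with hFdef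
    have harc0 : ∀ ij ∈ S, 0 ≤ CCMFS.arcl γ (τ ij) := fun ij _ => CCMFS.arcl_nonneg _
    have harcL : ∀ ij ∈ S, CCMFS.arcl γ (τ ij) ≤ L := fun ij h =>
      CCMFS.arcl_le hlen hL0 (hτmem ij h).2
    have hcover : S ⊆ ⋃ m ∈ Finset.Icc (0:ℤ) M, F m := by
      intro ij hij
      have hmem : ⌊CCMFS.arcl γ (τ ij) / 2⌋ ∈ Finset.Icc (0:ℤ) M := by
        rw [Finset.mem_Icc]
        constructor
        · refine Int.le_floor.mpr ?_
          have := harc0 ij hij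
          push_cast
          linarith
        · refine Int.floor_le_floor ?_
          have := harcL ij hij
          linarith
      exact Set.mem_biUnion hmem ⟨hij, rfl⟩
    have hfiber : ∀ m ∈ Finset.Icc (0:ℤ) M, (F m).encard ≤ 7 := by
      intro m hm
      have hm0 : (0:ℤ) ≤ m := (Finset.mem_Icc.mp hm).1
      have hmr : (0:ℝ) ≤ (m:ℝ) := by exact_mod_cast hm0
      obtain ⟨q, hq⟩ := CCMFS.exists_anchor hcont hlen (c := 2*(m:ℝ)+1) (by linarith)
      have hrange : ∀ ij ∈ F m, 2*(m:ℝ) ≤ CCMFS.arcl γ (τ ij) ∧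
          CCMFS.arcl γ (τ ij) < 2*(m:ℝ)+2 := by
        intro ij hij
        have hfl : ⌊CCMFS.arcl γ (τ ij) / 2⌋ = m := hij.2
        have h1 := Int.floor_le (CCMFS.arcl γ (τ ij) / 2)
        have h2 := Int.lt_floor_add_one (CCMFS.arcl γ (τ ij) / 2)
        rw [hfl] at h1 h2
        push_cast at h1 h2
        constructor <;> linarith
      have hanchor : ∀ ij ∈ F m, dist (γ (τ ij)) q ≤ 1 := by
        intro ij hij
        have h := hq (τ ij) (hτmem ij hij.1)
        obtain ⟨hr1, hr2⟩ := hrange ij hij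
        have habs : |CCMFS.arcl γ (τ ij) - (2*(m:ℝ)+1)| ≤ 1 := by
          rw [abs_le]; constructor <;> linarith
        linarith
      have hwin1 : ∀ ij ∈ F m, ⌊q 0⌋ - 1 ≤ ij.1 ∧ ij.1 ≤ (⌊q 0⌋ - 1) + 2 := by
        intro ij hij
        exact CCMFS.col_window (hsq1 ij hij.1)
          (le_trans (CCMFS.abs_coord_le_dist (γ (τ ij)) q 0) (hanchor ij hij))
      have hwin2 : ∀ ij ∈ F m, ⌊q 1⌋ - 1 ≤ ij.2 ∧ ij.2 ≤ (⌊q 1⌋ - 1) + 2 := by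
        intro ij hij
        exact CCMFS.col_window (hsq2 ij hij.1)
          (le_trans (CCMFS.abs_coord_le_dist (γ (τ ij)) q 1) (hanchor ij hij))
      set P₁ : Set (ℤ×ℤ) := {ij | ij ∈ F m ∧ CCMFS.arcl γ (τ ij) < 2*(m:ℝ)+1} with hP1def
      set P₂ : Set (ℤ×ℤ) := {ij | ij ∈ F m ∧ 2*(m:ℝ)+1 ≤ CCMFS.arcl γ (τ ij)} with hP2def
      have hP1sub : P₁ ⊆ F m := fun ij h => h.1
      have hP2sub : P₂ ⊆ F m := fun ij h => h.1
      have hsplit : ∀ x ∈ F m, x ∈ P₁ ∨ x ∈ P₂ := by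
        intro ij hij
        rcases lt_or_ge (CCMFS.arcl γ (τ ij)) (2*(m:ℝ)+1) with h | h
        · exact Or.inl ⟨hij, h⟩
        · exact Or.inr ⟨hij, h⟩
      have hclose : ∀ P : Set (ℤ×ℤ), P ⊆ F m →
          (∀ a ∈ P, ∀ b ∈ P, |CCMFS.arcl γ (τ a) - CCMFS.arcl γ (τ b)| ≤ 1) →
          (∀ a ∈ P, ∀ b ∈ P, a.1 ≤ b.1 + 1) ∧ (∀ a ∈ P, ∀ b ∈ P, a.2 ≤ b.2 + 1) := by
        intro P hPsub hP
        have hd : ∀ a ∈ P, ∀ b ∈ P, dist (γ (τ a)) (γ (τ b)) ≤ 1 := by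
          intro a ha b hb
          exact le_trans (CCMFS.dist_le_abs_arcl hlen (hτmem a (hPsub ha).1)
            (hτmem b (hPsub hb).1)) (hP a ha b hb)
        constructor
        · intro a ha b hb
          have habs := (CCMFS.abs_coord_le_dist (γ (τ a)) (γ (τ b)) 0).trans (hd a ha b hb)
          obtain ⟨hc1, hc2⟩ := abs_le.mp habs
          exact CCMFS.col_le (hsq1 a (hPsub ha).1) (hsq1 b (hPsub hb).1) (by linarith)
        · intro a ha b hb
          have habs := (CCMFS.abs_coord_le_dist (γ (τ a)) (γ (τ b)) 1).trans (hd a ha b hb)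
          obtain ⟨hc1, hc2⟩ := abs_le.mp habs
          exact CCMFS.col_le (hsq2 a (hPsub ha).1) (hsq2 b (hPsub hb).1) (by linarith)
      have hcl1 := hclose P₁ hP1sub (by
        intro a ha b hb
        obtain ⟨hra, _⟩ := hrange a (hP1sub ha)
        obtain ⟨hrb, _⟩ := hrange b (hP1sub hb)
        have ha2 := ha.2; have hb2 := hb.2
        rw [abs_le]; constructor <;> linarith)
      have hcl2 := hclose P₂ hP2sub (by
        intro a ha b hb
        obtain ⟨_, hra⟩ := hrange a (hP2sub ha)
        obtain ⟨_, hrb⟩ := hrange b (hP2sub hb)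
        have ha2 := ha.2; have hb2 := hb.2
        rw [abs_le]; constructor <;> linarith)
      have hblk : ∀ P : Set (ℤ×ℤ), P ⊆ F m → P.Nonempty →
          (∀ a ∈ P, ∀ b ∈ P, a.1 ≤ b.1 + 1) → (∀ a ∈ P, ∀ b ∈ P, a.2 ≤ b.2 + 1) →
          ∃ A B : ℤ, (⌊q 0⌋ - 1 ≤ A ∧ A ≤ ⌊q 0⌋) ∧ (⌊q 1⌋ - 1 ≤ B ∧ B ≤ ⌊q 1⌋) ∧
            ∀ p ∈ P, (A ≤ p.1 ∧ p.1 ≤ A + 1) ∧ (B ≤ p.2 ∧ p.2 ≤ B + 1) := by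
        intro P hPsub hPne h1 h2
        obtain ⟨a0, b0, hab⟩ := CCMFS.exists_block hPne h1 h2
        obtain ⟨p0, hp0⟩ := hPne
        have hw0 := hwin1 p0 (hPsub hp0)
        have hw0' := hwin2 p0 (hPsub hp0)
        have hab0 := hab p0 hp0
        refine ⟨max (⌊q 0⌋ - 1) (min a0 (⌊q 0⌋)), max (⌊q 1⌋ - 1) (min b0 (⌊q 1⌋)),
          ⟨by omega, by omega⟩, ⟨by omega, by omega⟩, ?_⟩
        intro p hp
        have hwp := hwin1 p (hPsub hp)
        have hwp' := hwin2 p (hPsub hp)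
        have habp := hab p hp
        omega
      have hone : ∀ (P : Set (ℤ×ℤ)) (A B : ℤ),
          (∀ p ∈ P, (A ≤ p.1 ∧ p.1 ≤ A + 1) ∧ (B ≤ p.2 ∧ p.2 ≤ B + 1)) →
          P ⊆ ({(A,B),(A,B+1),(A+1,B),(A+1,B+1)} : Set (ℤ×ℤ)) := by
        intro P A B hP x hx
        obtain ⟨⟨k1,k2⟩,k3,k4⟩ := hP x hx
        have hi : x.1 = A ∨ x.1 = A+1 := by omega
        have hj : x.2 = B ∨ x.2 = B+1 := by omega
        rcases hi with hi|hi <;> rcases hj with hj|hj <;>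
          simp [Set.mem_insert_iff, Prod.ext_iff, hi, hj]
      rcases Set.eq_empty_or_nonempty P₁ with h1e | h1ne
      · rcases Set.eq_empty_or_nonempty P₂ with h2e | h2ne
        · have hFsub : F m ⊆ (∅ : Set (ℤ×ℤ)) := by
            intro x hx
            rcases hsplit x hx with h|h
            · rw [h1e] at h; exact h
            · rw [h2e] at h; exact h
          calc (F m).encard ≤ (∅:Set (ℤ×ℤ)).encard := Set.encard_mono hFsub
            _ ≤ 7 := by simp
        · obtain ⟨A,B,_,_,hbp⟩ := hblk P₂ hP2sub h2ne hcl2.1 hcl2.2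
          have hsub : F m ⊆ ({(A,B),(A,B+1),(A+1,B),(A+1,B+1)} : Set (ℤ×ℤ)) := by
            intro x hx
            rcases hsplit x hx with h|h
            · rw [h1e] at h; exact absurd h (Set.notMem_empty x)
            · exact hone P₂ A B hbp h
          exact le_trans (Set.encard_mono hsub)
            (le_trans (CCMFS.encard_le_four _ _ _ _) (by norm_num))
      · rcases Set.eq_empty_or_nonempty P₂ with h2e | h2ne
        · obtain ⟨A,B,_,_,hbp⟩ := hblk P₁ hP1sub h1ne hcl1.1 hcl1.2
          have hsub : F m ⊆ ({(A,B),(A,B+1),(A+1,B),(A+1,B+1)} : Set (ℤ×ℤ)) := by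
            intro x hx
            rcases hsplit x hx with h|h
            · exact hone P₁ A B hbp h
            · rw [h2e] at h; exact absurd h (Set.notMem_empty x)
          exact le_trans (Set.encard_mono hsub)
            (le_trans (CCMFS.encard_le_four _ _ _ _) (by norm_num))
        · obtain ⟨A₁,B₁,hA₁,hB₁,hbp1⟩ := hblk P₁ hP1sub h1ne hcl1.1 hcl1.2
          obtain ⟨A₂,B₂,hA₂,hB₂,hbp2⟩ := hblk P₂ hP2sub h2ne hcl2.1 hcl2.2
          set pt : ℤ×ℤ := (max A₁ A₂, max B₁ B₂) with hptdef
          have hpt1 : pt ∈ ({(A₁,B₁),(A₁,B₁+1),(A₁+1,B₁),(A₁+1,B₁+1)} : Set (ℤ×ℤ)) := by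
            simp only [hptdef, Set.mem_insert_iff, Set.mem_singleton_iff, Prod.ext_iff]
            omega
          have hpt2 : pt ∈ ({(A₂,B₂),(A₂,B₂+1),(A₂+1,B₂),(A₂+1,B₂+1)} : Set (ℤ×ℤ)) := by
            simp only [hptdef, Set.mem_insert_iff, Set.mem_singleton_iff, Prod.ext_iff]
            omega
          have hsub : F m ⊆ ({(A₁,B₁),(A₁,B₁+1),(A₁+1,B₁),(A₁+1,B₁+1)} : Set (ℤ×ℤ)) ∪
              (({(A₂,B₂),(A₂,B₂+1),(A₂+1,B₂),(A₂+1,B₂+1)} : Set (ℤ×ℤ)) \ {pt}) := by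
            intro x hx
            by_cases hxpt : x = pt
            · exact Or.inl (hxpt ▸ hpt1)
            · rcases hsplit x hx with h|h
              · exact Or.inl (hone P₁ A₁ B₁ hbp1 h)
              · exact Or.inr ⟨hone P₂ A₂ B₂ hbp2 h, by simpa using hxpt⟩
          calc (F m).encard ≤ _ := Set.encard_mono hsub
            _ ≤ _ := Set.encard_union_le _ _
            _ ≤ 4 + 3 := add_le_add (CCMFS.encard_le_four _ _ _ _)
                (CCMFS.encard_diff_le_three hpt2 (CCMFS.encard_le_four _ _ _ _))
            _ ≤ 7 := by norm_num
    refine ⟨7 * (M+1).toNat, ?_, ?_⟩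
    · calc S.encard ≤ (⋃ m ∈ Finset.Icc (0:ℤ) M, F m).encard := Set.encard_mono hcover
        _ ≤ ∑ m ∈ Finset.Icc (0:ℤ) M, (F m).encard := CCMFS.encard_biUnion_le _ _
        _ ≤ ∑ _m ∈ Finset.Icc (0:ℤ) M, (7:ℕ∞) := Finset.sum_le_sum hfiber
        _ = (Finset.Icc (0:ℤ) M).card • (7:ℕ∞) := Finset.sum_const _
        _ = ((7 * (M+1).toNat : ℕ) : ℕ∞) := by
            rw [Int.card_Icc, show M + 1 - 0 = M + 1 from by ring, nsmul_eq_mul]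
            push_cast
            ring
    · have h1 : (M:ℝ) ≤ L/2 := Int.floor_le _
      have h3 : (((M+1).toNat : ℕ) : ℤ) = M + 1 := Int.toNat_of_nonneg (by omega)
      have h4 : (((M+1).toNat : ℕ) : ℝ) = ((M:ℝ)+1) := by exact_mod_cast congrArg (fun z : ℤ => (z : ℝ)) h3
      have h2 : ((7 * (M+1).toNat : ℕ) : ℝ) = 7*((M:ℝ)+1) := by
        rw [Nat.cast_mul, h4]; norm_num
      rw [h2]
      linarith
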